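/- (Lemma 8.3) For γ > 0 let m_γ = ψ⁽⁰⁾(γ) (the digamma function, i.e. the derivative of log Γ at γ) and σ_γ = √(ψ⁽¹⁾(γ)) (the square root of the trigamma function, i.e. of the second derivative of log Γ at γ), and define f_γ(x) = (σ_γ / Γ(γ)) · exp( γ·(σ_γ·x + m_γ) − e^{σ_γ·x + m_γ} ) for x ∈ ℝ (the density of the centered and normalized log-gamma variable (ξ − m_γ)/σ_γ, where ξ has density exp(γ·u − e^u)/Γ(γ)). Then for every γ₀ > 0 there exist constants L, D, d > 0 such that for all γ ≥ γ₀: f_γ(x) ≤ L for all x ∈ ℝ, and f_γ(x) ≤ D·e^{−d·x²} for all x ≥ 0. -/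

import Mathlib

open MeasureTheory Real Set Filter
open scoped ENNReal NNReal

noncomputable section

/-- The digamma function `ψ⁰(γ) = (log Γ)'(γ)`. -/
def digamma (γ : ℝ) : ℝ := deriv (fun x => Real.log (Real.Gamma x)) γ

/-- The trigamma function `ψ¹(γ) = (log Γ)''(γ)`. -/
def trigamma (γ : ℝ) : ℝ := deriv (deriv (fun x => Real.log (Real.Gamma x))) γ

/-- The density of the centered and normalized log-gamma variable `(ξ − m_γ)/σ_γ`,
where `ξ` has density `exp(γu − e^u)/Γ(γ)`, `m_γ = ψ⁰(γ)` and `σ_γ = √ψ¹(γ)`: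
`f_γ(x) = (σ_γ/Γ(γ)) exp(γ(σ_γ x + m_γ) − e^{σ_γ x + m_γ})`. -/
def logGammaDensity (γ : ℝ) (x : ℝ) : ℝ :=
  (Real.sqrt (trigamma γ) / Real.Gamma γ) *
    Real.exp (γ * (Real.sqrt (trigamma γ) * x + digamma γ) -
      Real.exp (Real.sqrt (trigamma γ) * x + digamma γ))

end


open scoped Topology

namespace LG

noncomputable def g (k : ℕ) (x : ℝ) : ℝ := 1/((k:ℝ)+1) - 1/(x+k)

noncomputable def psi0 (x : ℝ) : ℝ := -Real.eulerMascheroniConstant + ∑' k : ℕ, g k x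
noncomputable def psi1 (x : ℝ) : ℝ := ∑' k : ℕ, 1/(x+(k:ℝ))^2

noncomputable def dSeq (n : ℕ) (x : ℝ) : ℝ :=
  Real.log n - ∑ k ∈ Finset.range (n+1), 1/(x+(k:ℝ))
noncomputable def tSeq (n : ℕ) (x : ℝ) : ℝ := ∑ k ∈ Finset.range (n+1), 1/(x+(k:ℝ))^2
noncomputable def FSeq (n : ℕ) (x : ℝ) : ℝ :=
  x * Real.log n + Real.log (Nat.factorial n) - ∑ k ∈ Finset.range (n+1), Real.log (x+(k:ℝ))

lemma summable_sq {x : ℝ} (hx : 0 < x) : Summable (fun k : ℕ => 1/(x+(k:ℝ))^2) := by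
  have := (Real.summable_one_div_nat_add_rpow x 2).mpr (by norm_num)
  refine this.congr fun k => ?_
  have h1 : 0 ≤ (k:ℝ) + x := by positivity
  have h2 : ((2:ℝ)) = ((2:ℕ):ℝ) := by norm_num
  rw [abs_of_nonneg h1, h2, Real.rpow_natCast]
  ring

lemma tsum_telescope {f : ℕ → ℝ} (hf : Summable (fun k => f k - f (k+1)))
    (h0 : Tendsto f atTop (𝓝 0)) : ∑' k, (f k - f (k+1)) = f 0 := by
  have h1 := hf.hasSum.tendsto_sum_nat
  have h2 : Tendsto (fun n => ∑ k ∈ Finset.range n, (f k - f (k+1))) atTop (𝓝 (f 0 - 0)) := by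
    simp_rw [Finset.sum_range_sub' f]
    exact tendsto_const_nhds.sub h0
  simpa using tendsto_nhds_unique h1 h2

lemma summable_tel {x : ℝ} (hx : 0 < x) :
    Summable (fun k : ℕ => 1/(x+(k:ℝ)) - 1/(x+(k:ℝ)+1)) := by
  refine (summable_sq hx).of_nonneg_of_le (fun k => ?_) (fun k => ?_) <;>
    [skip; skip] <;>
  · have h1 : (0:ℝ) < x + k := by positivity
    have h2 : (0:ℝ) < x + k + 1 := by positivity
    first
    | · rw [sub_nonneg]
        exact one_div_le_one_div_of_le h1 (by linarith)
    | · rw [div_sub_div _ _ h1.ne' h2.ne', div_le_div_iff₀ (by positivity) (by positivity)]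
        nlinarith [h1.le, h2.le]

lemma tendsto_one_div_add_atTop (x : ℝ) : Tendsto (fun k : ℕ => 1/(x+(k:ℝ))) atTop (𝓝 0) := by
  apply Tendsto.comp tendsto_inv_atTop_zero ?_ |>.congr fun k => by
    rw [Function.comp_apply, one_div]
  exact tendsto_atTop_add_const_left _ x tendsto_natCast_atTop_atTop

lemma tsum_tel {x : ℝ} (hx : 0 < x) :
    ∑' k : ℕ, (1/(x+(k:ℝ)) - 1/(x+(k:ℝ)+1)) = 1/x := by
  have h := tsum_telescope (f := fun k : ℕ => 1/(x+(k:ℝ)))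
    ((summable_tel hx).congr fun k => by push_cast; ring) (tendsto_one_div_add_atTop x)
  simp only [Nat.cast_zero, add_zero] at h
  rw [← h]
  exact tsum_congr fun k => by push_cast; ring

lemma psi1_ge {x : ℝ} (hx : 0 < x) : 1/x ≤ psi1 x := by
  rw [← tsum_tel hx]
  refine Summable.tsum_le_tsum (fun k => ?_) (summable_tel hx) (summable_sq hx)
  have h1 : (0:ℝ) < x + k := by positivity
  have h2 : (0:ℝ) < x + k + 1 := by positivity
  rw [div_sub_div _ _ h1.ne' h2.ne', div_le_div_iff₀ (by positivity) (by positivity)]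
  nlinarith [h1.le, h2.le]

set_option maxHeartbeats 1000000 in
lemma psi1_le {x : ℝ} (hx : 0 < x) : psi1 x ≤ 1/x + 1/x^2 := by
  have hsh : Summable (fun k : ℕ => 1/(x+((k+1:ℕ):ℝ))^2) :=
    (summable_nat_add_iff 1).mpr (summable_sq hx)
  have h0 : (∑' k : ℕ, 1/(x+(k:ℝ))^2) = 1/(x+((0:ℕ):ℝ))^2 + ∑' k : ℕ, 1/(x+((k+1:ℕ):ℝ))^2 :=
    Summable.tsum_eq_zero_add (summable_sq hx)
  rw [psi1, h0]
  have h1 : ∑' k : ℕ, 1/(x+((k+1:ℕ):ℝ))^2 ≤ 1/x := by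
    rw [← tsum_tel hx]
    refine Summable.tsum_le_tsum (fun k => ?_) hsh (summable_tel hx)
    have h1 : (0:ℝ) < x + k := by positivity
    have h2 : (0:ℝ) < x + k + 1 := by positivity
    have h3 : (x+((k+1:ℕ):ℝ)) = x + k + 1 := by push_cast; ring
    rw [h3, div_sub_div _ _ h1.ne' h2.ne', div_le_div_iff₀ (by positivity) (by positivity)]
    nlinarith [h1.le, h2.le]
  have h2 : (1:ℝ)/(x+((0:ℕ):ℝ))^2 = 1/x^2 := by norm_num
  rw [h2]
  linarith

lemma summable_base : Summable (fun k : ℕ => 1/((k:ℝ)+1)^2) := by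
  have h := summable_one_div_nat_pow.mpr (one_lt_two (α := ℕ))
  have := (summable_nat_add_iff (f := fun n : ℕ => 1/(n:ℝ)^2) 1).mpr h
  exact this.congr fun k => by push_cast; ring

lemma g_bound {a b x : ℝ} (ha : 0 < a) (hx : x ∈ Icc a b) (k : ℕ) :
    |g k x| ≤ ((b+1) * max 1 (1/a)) * (1/((k:ℝ)+1)^2) := by
  obtain ⟨h1, h2⟩ := hx
  have hk : (0:ℝ) ≤ k := Nat.cast_nonneg k
  have hxpos : 0 < x := lt_of_lt_of_le ha h1
  have hxk : 0 < x + k := by positivity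
  have hg : g k x = (x-1) / (((k:ℝ)+1) * (x+k)) := by
    rw [g, div_sub_div _ _ (by positivity) hxk.ne']
    congr 1
    ring
  have hD : (0:ℝ) < ((k:ℝ)+1) * (x+k) := mul_pos (by positivity) hxk
  rw [hg, abs_div, abs_of_pos hD]
  have hab : |x - 1| ≤ b + 1 := by
    rw [abs_le]
    constructor <;> nlinarith
  have hmax : ((k:ℝ)+1)^2 ≤ max 1 (1/a) * (((k:ℝ)+1) * (x+k)) := by
    rcases le_total 1 x with h | h
    · calc ((k:ℝ)+1)^2 ≤ ((k:ℝ)+1) * (x+k) := by nlinarith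
        _ ≤ max 1 (1/a) * (((k:ℝ)+1) * (x+k)) := by
            nlinarith [le_max_left 1 (1/a), mul_pos (show (0:ℝ) < (k:ℝ)+1 by positivity) hxk]
    · have h3 : 1/a ≤ max 1 (1/a) := le_max_right _ _
      have h4 : ((k:ℝ)+1) ≤ (x+k)/a := by
        rw [le_div_iff₀ ha]
        nlinarith
      calc ((k:ℝ)+1)^2 ≤ ((k:ℝ)+1) * ((x+k)/a) := by nlinarith
        _ = (1/a) * (((k:ℝ)+1) * (x+k)) := by ring
        _ ≤ max 1 (1/a) * (((k:ℝ)+1) * (x+k)) := by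
            nlinarith [mul_pos (show (0:ℝ) < (k:ℝ)+1 by positivity) hxk]
  rw [div_le_iff₀ hD]
  have key : (1:ℝ) ≤ max 1 (1/a) * (((k:ℝ)+1) * (x+k)) / ((k:ℝ)+1)^2 := by
    rw [le_div_iff₀ (by positivity)]
    linarith [hmax]
  have hb1 : (0:ℝ) ≤ b + 1 := by nlinarith
  calc |x-1| ≤ b+1 := hab
    _ = (b+1) * 1 := by ring
    _ ≤ (b+1) * (max 1 (1/a) * (((k:ℝ)+1) * (x+k)) / ((k:ℝ)+1)^2) :=
        mul_le_mul_of_nonneg_left key hb1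
    _ = ((b+1) * max 1 (1/a)) * (1/((k:ℝ)+1)^2) * (((k:ℝ)+1) * (x+k)) := by ring
lemma summable_g {x : ℝ} (hx : 0 < x) : Summable (fun k : ℕ => g k x) := by
  apply Summable.of_abs
  apply Summable.of_nonneg_of_le (fun k => abs_nonneg _)
    (fun k => g_bound hx (mem_Icc.mpr ⟨le_refl x, le_refl x⟩) k)
  exact (summable_base.mul_left _)

lemma tendsto_c : Tendsto (fun n : ℕ => Real.log n - ∑ k ∈ Finset.range (n+1), 1/((k:ℝ)+1))
    atTop (𝓝 (-Real.eulerMascheroniConstant)) := by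
  have h1 := Real.tendsto_harmonic_sub_log.comp (tendsto_add_atTop_nat 1)
  have h2 := Real.tendsto_harmonic_sub_log_add_one
  have h3 : Tendsto (fun n : ℕ => (Real.log (n+1) - Real.log n)) atTop (𝓝 0) := by
    have := Real.tendsto_harmonic_sub_log.sub h2
    simp only [sub_self] at this
    apply this.congr
    intro n
    push_cast
    ring
  have h4 := (h1.add h3).neg
  rw [show -(Real.eulerMascheroniConstant + 0) = -Real.eulerMascheroniConstant by ring] at h4
  apply h4.congr
  intro n
  have hh : ((harmonic (n+1) : ℚ) : ℝ) = ∑ k ∈ Finset.range (n+1), 1/((k:ℝ)+1) := by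
    rw [harmonic]
    push_cast
    exact Finset.sum_congr rfl fun i _ => by rw [one_div]
  simp only [Function.comp_apply]
  rw [← hh]
  push_cast
  ring

lemma tendsto_dSeq {x : ℝ} (hx : 0 < x) :
    Tendsto (fun n => dSeq n x) atTop (𝓝 (psi0 x)) := by
  have hsum : Tendsto (fun n => ∑ k ∈ Finset.range (n+1), g k x) atTop (𝓝 (∑' k, g k x)) :=
    ((summable_g hx).hasSum.tendsto_sum_nat).comp (tendsto_add_atTop_nat 1)
  have := tendsto_c.add hsum
  rw [psi0]
  apply this.congr
  intro n
  simp only [g, Finset.sum_sub_distrib]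
  rw [dSeq]
  ring

lemma log_ratio_le {y : ℝ} (hy : 0 < y) : Real.log (y+1) - Real.log y ≤ 1/y := by
  rw [← Real.log_div (by positivity) hy.ne']
  calc Real.log ((y+1)/y) ≤ (y+1)/y - 1 :=
        Real.log_le_sub_one_of_pos (by positivity)
    _ = 1/y := by field_simp; ring

lemma one_div_le_log_ratio {y : ℝ} (hy : 0 < y) : 1/(y+1) ≤ Real.log (y+1) - Real.log y := by
  have h := Real.log_le_sub_one_of_pos (show (0:ℝ) < y/(y+1) by positivity)
  have h2 : Real.log (y/(y+1)) = -(Real.log (y+1) - Real.log y) := by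
    rw [Real.log_div hy.ne' (by positivity)]
    ring
  have h3 : y/(y+1) - 1 = -(1/(y+1)) := by field_simp; ring
  rw [h2, h3] at h
  linarith

lemma tendsto_log_shift {c : ℝ} (hc : 0 ≤ c) :
    Tendsto (fun n : ℕ => Real.log (c+(n:ℝ)) - Real.log n) atTop (𝓝 0) := by
  have h1 : Tendsto (fun n : ℕ => 1 + c/(n:ℝ)) atTop (𝓝 1) := by
    have := (tendsto_const_div_atTop_nhds_zero_nat c).const_add 1
    simpa using this
  have h2 : Tendsto (fun n : ℕ => Real.log (1 + c/(n:ℝ))) atTop (𝓝 0) := by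
    have := ((Real.continuousAt_log (by norm_num : (1:ℝ) ≠ 0)).tendsto).comp h1
    simpa [Function.comp_def] using this
  apply h2.congr'
  filter_upwards [eventually_ge_atTop 1] with n hn
  have hn0 : (0:ℝ) < n := by exact_mod_cast hn
  have hcn : (0:ℝ) < c + n := by linarith
  rw [← Real.log_div hcn.ne' hn0.ne']
  congr 1
  field_simp
  ring

lemma log_tele (x : ℝ) (n : ℕ) :
    ∑ k ∈ Finset.range n, (Real.log (x+(k:ℝ)+1) - Real.log (x+(k:ℝ)))
      = Real.log (x+(n:ℝ)) - Real.log x := by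
  have h := Finset.sum_range_sub (fun k : ℕ => Real.log (x+(k:ℝ))) n
  simp only [Nat.cast_zero, add_zero] at h
  rw [← h]
  refine Finset.sum_congr rfl fun i _ => ?_
  have : x + ((i:ℝ)+1) = x + (i:ℝ) + 1 := by ring
  rw [Nat.cast_add, Nat.cast_one, this]

lemma sum_ge_log {x : ℝ} (hx : 0 < x) (n : ℕ) :
    Real.log (x+(n:ℝ)+1) - Real.log x ≤ ∑ k ∈ Finset.range (n+1), 1/(x+(k:ℝ)) := by
  have tele := log_tele x (n+1)
  have h2 : Real.log (x+((n+1:ℕ):ℝ)) = Real.log (x+(n:ℝ)+1) := by push_cast; ring_nf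
  rw [h2] at tele
  rw [← tele]
  exact Finset.sum_le_sum fun k _ => log_ratio_le (by positivity)

lemma sum_le_log {x : ℝ} (hx : 0 < x) (n : ℕ) :
    ∑ k ∈ Finset.range (n+1), 1/(x+(k:ℝ))
      ≤ 1/x + (Real.log (x+(n:ℝ)) - Real.log x) := by
  rw [Finset.sum_range_succ' (fun k : ℕ => 1/(x+(k:ℝ))) n]
  simp only [Nat.cast_zero, add_zero, Nat.cast_add, Nat.cast_one]
  have key : ∑ k ∈ Finset.range n, 1/(x+((k:ℝ)+1)) ≤ Real.log (x+(n:ℝ)) - Real.log x := by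
    rw [← log_tele x n]
    refine Finset.sum_le_sum fun k _ => ?_
    have hk : (0:ℝ) < x + k := by positivity
    have harg : x + ((k:ℝ)+1) = x + (k:ℝ) + 1 := by ring
    rw [harg]
    exact one_div_le_log_ratio hk
  linarith

lemma psi0_le_log {x : ℝ} (hx : 0 < x) : psi0 x ≤ Real.log x := by
  refine le_of_tendsto (tendsto_dSeq hx) ?_
  filter_upwards [eventually_ge_atTop 1] with n hn
  have hn0 : (0:ℝ) < n := by exact_mod_cast hn
  have hS := sum_ge_log hx n
  have hlog : Real.log n ≤ Real.log (x+(n:ℝ)+1) :=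
    Real.log_le_log hn0 (by linarith)
  rw [dSeq]
  linarith

lemma psi0_ge {x : ℝ} (hx : 0 < x) : Real.log x - 1/x ≤ psi0 x := by
  refine le_of_tendsto_of_tendsto' ?_ (tendsto_dSeq hx) ?_
    (f := fun n : ℕ => Real.log x - 1/x - (Real.log (x+(n:ℝ)) - Real.log n))
  · have := (tendsto_log_shift hx.le).const_sub (Real.log x - 1/x)
    simpa using this
  · intro n
    have hS := sum_le_log hx n
    rw [dSeq]
    linarith

-- midpoint inequality
lemma mid {y : ℝ} (hy : 1 ≤ y) : 1/y ≤ Real.log (y+2⁻¹) - Real.log (y-2⁻¹) := by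
  have h0 : (0:ℝ) < y - 2⁻¹ := by norm_num; linarith
  have h1 : (0:ℝ) < y + 2⁻¹ := by positivity
  have hy0 : (0:ℝ) < y := by linarith
  have hle : y - 2⁻¹ ≤ y + 2⁻¹ := by linarith
  have hcont : ContinuousOn (fun t : ℝ => 1/t) (uIcc (y-2⁻¹) (y+2⁻¹)) := by
    apply ContinuousOn.div continuousOn_const continuousOn_id
    intro t ht
    rw [uIcc_of_le hle] at ht
    exact ne_of_gt (lt_of_lt_of_le h0 ht.1)
  have int1 : IntervalIntegrable (fun t : ℝ => 1/t) volume (y-2⁻¹) (y+2⁻¹) :=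
    hcont.intervalIntegrable
  have int2 : IntervalIntegrable (fun t : ℝ => 1/y - (t-y)/y^2) volume (y-2⁻¹) (y+2⁻¹) := by
    apply Continuous.intervalIntegrable
    continuity
  have hIlog : ∫ t in (y-2⁻¹)..(y+2⁻¹), 1/t = Real.log (y+2⁻¹) - Real.log (y-2⁻¹) := by
    rw [integral_one_div (notMem_uIcc_of_lt h0 h1), Real.log_div h1.ne' h0.ne']
  have hT : (∫ t in (y-2⁻¹)..(y+2⁻¹), (1/y - (t-y)/y^2)) = 1/y := by
    have hder : ∀ t ∈ uIcc (y-2⁻¹) (y+2⁻¹),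
        HasDerivAt (fun t : ℝ => t/y - (t-y)^2/(2*y^2)) (1/y - (t-y)/y^2) t := by
      intro t _
      have hd1 : HasDerivAt (fun t : ℝ => t/y) (1/y) t := by
        simpa using (hasDerivAt_id t).div_const y
      have hd2 : HasDerivAt (fun t : ℝ => (t-y)^2) (2*(t-y)) t := by
        have := ((hasDerivAt_id t).sub_const y).fun_pow 2
        simpa using this
      have hd3 := hd2.div_const (2*y^2)
      have := hd1.sub hd3
      refine this.congr_deriv ?_
      field_simp
    rw [intervalIntegral.integral_eq_sub_of_hasDerivAt hder int2]
    field_simp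
    ring
  have hmono : (∫ t in (y-2⁻¹)..(y+2⁻¹), (1/y - (t-y)/y^2))
      ≤ ∫ t in (y-2⁻¹)..(y+2⁻¹), 1/t := by
    apply intervalIntegral.integral_mono_on hle int2 int1
    intro t ht
    have ht1 := ht.1
    have htpos : 0 < t := lt_of_lt_of_le h0 ht.1
    rw [div_sub_div _ _ (by positivity : (y:ℝ) ≠ 0) (by positivity : (y:ℝ)^2 ≠ 0), div_le_div_iff₀ (by positivity) htpos]
    nlinarith [sq_nonneg (t-y)]
  linarith [hT ▸ hmono, hIlog ▸ hmono]

lemma psi0_ge_half {x : ℝ} (hx : 1 ≤ x) : Real.log (x - 2⁻¹) ≤ psi0 x := by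
  have hx0 : (0:ℝ) < x := by linarith
  refine le_of_tendsto_of_tendsto' ?_ (tendsto_dSeq hx0) ?_
    (f := fun n : ℕ => Real.log (x-2⁻¹) - (Real.log ((x+2⁻¹)+(n:ℝ)) - Real.log n))
  · have := (tendsto_log_shift (by linarith : (0:ℝ) ≤ x+2⁻¹)).const_sub (Real.log (x-2⁻¹))
    simpa using this
  · intro n
    have tele := Finset.sum_range_sub (fun k : ℕ => Real.log (x+(k:ℝ)-2⁻¹)) (n+1)
    simp only [Nat.cast_zero, add_zero] at tele
    have hsum : ∑ k ∈ Finset.range (n+1), 1/(x+(k:ℝ))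
        ≤ Real.log (x+((n+1:ℕ):ℝ)-2⁻¹) - Real.log (x-2⁻¹) := by
      rw [← tele]
      refine Finset.sum_le_sum fun k _ => ?_
      have hyk : 1 ≤ x + (k:ℝ) := by
        have : (0:ℝ) ≤ k := Nat.cast_nonneg k
        linarith
      have h := mid hyk
      have harg : x + ((k:ℝ)+1) - 2⁻¹ = (x+(k:ℝ)) + 2⁻¹ := by ring
      rw [Nat.cast_add, Nat.cast_one, harg]
      exact h
    have harg2 : x + ((n+1:ℕ):ℝ) - 2⁻¹ = (x+2⁻¹) + (n:ℝ) := by push_cast; ring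
    rw [harg2] at hsum
    rw [dSeq]
    linarith

lemma psi0_mono {x y : ℝ} (hx : 0 < x) (hxy : x ≤ y) : psi0 x ≤ psi0 y := by
  have hy : 0 < y := lt_of_lt_of_le hx hxy
  refine le_of_tendsto_of_tendsto' (tendsto_dSeq hx) (tendsto_dSeq hy) fun n => ?_
  rw [dSeq, dSeq]
  have key : ∑ k ∈ Finset.range (n+1), 1/(y+(k:ℝ)) ≤ ∑ k ∈ Finset.range (n+1), 1/(x+(k:ℝ)) :=
    Finset.sum_le_sum fun i _ => by
      have hi : (0:ℝ) ≤ i := Nat.cast_nonneg i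
      exact one_div_le_one_div_of_le (by linarith) (by linarith)
  linarith

lemma tuo_succ {F : ℕ → ℝ → ℝ} {f : ℝ → ℝ} {s : Set ℝ}
    (h : TendstoUniformlyOn F f atTop s) :
    TendstoUniformlyOn (fun n => F (n+1)) f atTop s :=
  fun u hu => (tendsto_add_atTop_nat 1).eventually (h u hu)

lemma dSeq_eq (n : ℕ) (x : ℝ) :
    dSeq n x = (Real.log n - ∑ k ∈ Finset.range (n+1), 1/((k:ℝ)+1))
      + ∑ k ∈ Finset.range (n+1), g k x := by
  simp only [g, Finset.sum_sub_distrib, dSeq]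
  ring

lemma dSeq_unif {a b : ℝ} (ha : 0 < a) :
    TendstoUniformlyOn dSeq psi0 atTop (Icc a b) := by
  have hM : Summable (fun k : ℕ => ((b+1) * max 1 (1/a)) * (1/((k:ℝ)+1)^2)) :=
    summable_base.mul_left _
  have hsum : TendstoUniformlyOn (fun n x => ∑ k ∈ Finset.range n, g k x)
      (fun x => ∑' k : ℕ, g k x) atTop (Icc a b) :=
    tendstoUniformlyOn_tsum_nat hM fun k x hx => by
      simpa [Real.norm_eq_abs] using g_bound ha hx k
  have hsum' := tuo_succ hsum
  have hconst : TendstoUniformlyOn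
      (fun (n : ℕ) (_ : ℝ) => Real.log n - ∑ k ∈ Finset.range (n+1), 1/((k:ℝ)+1))
      (fun _ => -Real.eulerMascheroniConstant) atTop (Icc a b) :=
    tendsto_c.tendstoUniformlyOn_const _
  have := hconst.add hsum'
  apply this.congr_right ?_ |>.congr ?_
  · intro x _
    simp only [Pi.add_apply]
    rw [psi0]
  · filter_upwards with n
    intro x _
    simp only [Pi.add_apply]
    rw [dSeq_eq]

lemma compact_subset {K : Set ℝ} (hK : IsCompact K) (hKs : K ⊆ Ioi 0) (hne : K.Nonempty) :
    ∃ a b : ℝ, 0 < a ∧ K ⊆ Icc a b := by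
  refine ⟨sInf K, sSup K, hKs (hK.sInf_mem hne), fun x hx =>
    ⟨csInf_le hK.bddBelow hx, le_csSup hK.bddAbove hx⟩⟩

lemma dSeq_locunif : TendstoLocallyUniformlyOn dSeq psi0 atTop (Ioi 0) := by
  rw [tendstoLocallyUniformlyOn_iff_forall_isCompact isOpen_Ioi]
  intro K hKs hK
  rcases K.eq_empty_or_nonempty with rfl | hne
  · exact tendstoUniformlyOn_empty
  · obtain ⟨a, b, ha, hab⟩ := compact_subset hK hKs hne
    exact (dSeq_unif ha).mono hab

lemma tSeq_unif {a b : ℝ} (ha : 0 < a) :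
    TendstoUniformlyOn tSeq psi1 atTop (Icc a b) := by
  have hsum : TendstoUniformlyOn (fun n x => ∑ k ∈ Finset.range n, 1/(x+(k:ℝ))^2)
      (fun x => ∑' k : ℕ, 1/(x+(k:ℝ))^2) atTop (Icc a b) := by
    refine tendstoUniformlyOn_tsum_nat (summable_sq ha) fun k x hx => ?_
    have h1 : (0:ℝ) < x + k := by
      have := hx.1
      have hk : (0:ℝ) ≤ k := Nat.cast_nonneg k
      linarith
    rw [Real.norm_eq_abs, abs_of_pos (by positivity)]
    gcongr
    all_goals first | exact hx.1 | positivity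
  exact tuo_succ hsum

lemma tSeq_locunif : TendstoLocallyUniformlyOn tSeq psi1 atTop (Ioi 0) := by
  rw [tendstoLocallyUniformlyOn_iff_forall_isCompact isOpen_Ioi]
  intro K hKs hK
  rcases K.eq_empty_or_nonempty with rfl | hne
  · exact tendstoUniformlyOn_empty
  · obtain ⟨a, b, ha, hab⟩ := compact_subset hK hKs hne
    exact (tSeq_unif ha).mono hab

lemma hasDerivAt_FSeq (n : ℕ) {x : ℝ} (hx : 0 < x) :
    HasDerivAt (FSeq n) (dSeq n x) x := by
  have h1 : HasDerivAt (fun x : ℝ => x * Real.log n + Real.log (Nat.factorial n))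
      (Real.log n) x := by
    simpa using (hasDerivAt_mul_const (Real.log (n:ℝ))).add_const (Real.log (Nat.factorial n))
  have h2 : HasDerivAt (fun x : ℝ => ∑ k ∈ Finset.range (n+1), Real.log (x+(k:ℝ)))
      (∑ k ∈ Finset.range (n+1), 1/(x+(k:ℝ))) x := by
    apply HasDerivAt.fun_sum
    intro k _
    have hk : (0:ℝ) < x + k := by positivity
    have := ((hasDerivAt_id x).add_const (k:ℝ)).log hk.ne'
    simpa using this
  exact h1.sub h2

lemma hasDerivAt_dSeq (n : ℕ) {x : ℝ} (hx : 0 < x) :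
    HasDerivAt (dSeq n) (tSeq n x) x := by
  have h2 : HasDerivAt (fun x : ℝ => ∑ k ∈ Finset.range (n+1), 1/(x+(k:ℝ)))
      (∑ k ∈ Finset.range (n+1), -(1/(x+(k:ℝ))^2)) x := by
    apply HasDerivAt.fun_sum
    intro k _
    have hk : (0:ℝ) < x + k := by positivity
    have := ((hasDerivAt_id x).add_const (k:ℝ)).inv hk.ne'
    convert this using 1
    · rfl
    · funext y
      simp [one_div]
    · simp [neg_div, one_div]
  have h4 := h2.const_sub (Real.log (n:ℝ))
  have hfun : (fun x : ℝ => Real.log (n:ℝ) - ∑ k ∈ Finset.range (n+1), 1/(x+(k:ℝ))) = dSeq n := by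
    funext y
    rw [dSeq]
  rw [hfun] at h4
  refine h4.congr_deriv ?_
  rw [tSeq]
  rw [← Finset.sum_neg_distrib]
  exact Finset.sum_congr rfl fun k _ => by ring

lemma tendsto_FSeq {x : ℝ} (hx : 0 < x) :
    Tendsto (fun n => FSeq n x) atTop (𝓝 (Real.log (Real.Gamma x))) := by
  have hG := Real.GammaSeq_tendsto_Gamma x
  have hpos := Real.Gamma_pos_of_pos hx
  have hlog := ((Real.continuousAt_log hpos.ne').tendsto).comp hG
  apply hlog.congr'
  filter_upwards [eventually_ge_atTop 1] with n hn
  have hn0 : (0:ℝ) < n := by exact_mod_cast hn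
  have hprod : (0:ℝ) < ∏ j ∈ Finset.range (n+1), (x + (j:ℝ)) :=
    Finset.prod_pos fun j _ => by positivity
  have hfac : (0:ℝ) < (Nat.factorial n : ℝ) := by
    exact_mod_cast Nat.factorial_pos n
  simp only [Function.comp_apply, Real.GammaSeq]
  rw [Real.log_div (by positivity) hprod.ne', Real.log_mul (by positivity) hfac.ne',
    Real.log_rpow hn0,
    Real.log_prod (s := Finset.range (n+1)) (f := fun j : ℕ => x + (j:ℝ))
      (fun j _ => (by positivity : (0:ℝ) < x + (j:ℝ)).ne')]
  rw [FSeq]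

lemma hasDerivAt_logGamma {x : ℝ} (hx : 0 < x) :
    HasDerivAt (fun y => Real.log (Real.Gamma y)) (psi0 x) x := by
  apply hasDerivAt_of_tendstoLocallyUniformlyOn isOpen_Ioi dSeq_locunif
    (Filter.Eventually.of_forall fun n => fun y hy => hasDerivAt_FSeq n hy)
    (fun y hy => tendsto_FSeq hy) hx

lemma digamma_eq {x : ℝ} (hx : 0 < x) : digamma x = psi0 x :=
  (hasDerivAt_logGamma hx).deriv

lemma hasDerivAt_psi0 {x : ℝ} (hx : 0 < x) : HasDerivAt psi0 (psi1 x) x := by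
  apply hasDerivAt_of_tendstoLocallyUniformlyOn isOpen_Ioi tSeq_locunif
    (Filter.Eventually.of_forall fun n => fun y hy => hasDerivAt_dSeq n hy)
    (fun y hy => tendsto_dSeq hy) hx

lemma hasDerivAt_digamma {x : ℝ} (hx : 0 < x) : HasDerivAt digamma (psi1 x) x := by
  apply (hasDerivAt_psi0 hx).congr_of_eventuallyEq
  filter_upwards [eventually_gt_nhds hx] with y hy
  exact digamma_eq hy

lemma trigamma_eq {x : ℝ} (hx : 0 < x) : trigamma x = psi1 x := by
  have : trigamma x = deriv digamma x := rfl
  rw [this, (hasDerivAt_digamma hx).deriv]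

lemma psi0_intble {γ : ℝ} (hγ : 1 ≤ γ) : IntervalIntegrable psi0 volume 1 γ := by
  apply MonotoneOn.intervalIntegrable
  intro x hx y hy hxy
  rw [uIcc_of_le hγ] at hx
  exact psi0_mono (lt_of_lt_of_le one_pos hx.1) hxy

lemma logGamma_eq_integral {γ : ℝ} (hγ : 1 ≤ γ) :
    Real.log (Real.Gamma γ) = ∫ t in (1:ℝ)..γ, psi0 t := by
  have h := intervalIntegral.integral_eq_sub_of_hasDerivAt
    (f := fun y => Real.log (Real.Gamma y)) (f' := psi0)
    (fun t ht => by
      rw [uIcc_of_le hγ] at ht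
      exact hasDerivAt_logGamma (lt_of_lt_of_le one_pos ht.1))
    (psi0_intble hγ)
  rw [h]
  norm_num [Real.Gamma_one]

lemma loghalf_contOn {γ : ℝ} (hγ : 1 ≤ γ) :
    IntervalIntegrable (fun t : ℝ => Real.log (t - 2⁻¹)) volume 1 γ := by
  apply ContinuousOn.intervalIntegrable
  apply ContinuousOn.log ((continuous_id.sub continuous_const).continuousOn)
  intro t ht
  rw [uIcc_of_le hγ] at ht
  have : (1:ℝ) ≤ t := ht.1
  norm_num
  linarith

lemma integral_loghalf {γ : ℝ} (hγ : 1 ≤ γ) :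
    ∫ t in (1:ℝ)..γ, Real.log (t - 2⁻¹)
      = ((γ-2⁻¹) * Real.log (γ-2⁻¹) - γ) - (2⁻¹ * Real.log 2⁻¹ - 1) := by
  have hder : ∀ t ∈ uIcc (1:ℝ) γ,
      HasDerivAt (fun t : ℝ => (t-2⁻¹) * Real.log (t-2⁻¹) - t) (Real.log (t - 2⁻¹)) t := by
    intro t ht
    rw [uIcc_of_le hγ] at ht
    have ht1 : (1:ℝ) ≤ t := ht.1
    have hpos : (0:ℝ) < t - 2⁻¹ := by norm_num; linarith
    have h1 : HasDerivAt (fun t : ℝ => t - 2⁻¹) 1 t := (hasDerivAt_id t).sub_const _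
    have h2 : HasDerivAt (fun t : ℝ => Real.log (t - 2⁻¹)) (1/(t-2⁻¹)) t := by
      simpa using h1.log hpos.ne'
    have h3 := (h1.mul h2).sub (hasDerivAt_id t)
    refine h3.congr_deriv ?_
    have hinv : (t-2⁻¹)*(1/(t-2⁻¹)) = 1 := by
      rw [mul_one_div, div_self hpos.ne']
    rw [one_mul, hinv]
    ring
  rw [intervalIntegral.integral_eq_sub_of_hasDerivAt hder (loghalf_contOn hγ)]
  norm_num

lemma logGamma_lb {γ : ℝ} (hγ : 1 ≤ γ) :
    γ * Real.log γ - γ - 2⁻¹ * Real.log γ ≤ Real.log (Real.Gamma γ) := by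
  have hmono : ∫ t in (1:ℝ)..γ, Real.log (t - 2⁻¹) ≤ ∫ t in (1:ℝ)..γ, psi0 t := by
    apply intervalIntegral.integral_mono_on hγ (loghalf_contOn hγ) (psi0_intble hγ)
    intro t ht
    exact psi0_ge_half ht.1
  have hInt : ((γ-2⁻¹) * Real.log (γ-2⁻¹) - γ) - (2⁻¹ * Real.log 2⁻¹ - 1)
      ≤ Real.log (Real.Gamma γ) := by
    rw [logGamma_eq_integral hγ, ← integral_loghalf hγ]
    exact hmono
  have hpos : (0:ℝ) < γ - 2⁻¹ := by norm_num; linarith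
  have key : Real.log γ - Real.log (γ-2⁻¹) ≤ 2⁻¹/(γ-2⁻¹) := by
    rw [← Real.log_div (by positivity) hpos.ne']
    calc Real.log (γ/(γ-2⁻¹)) ≤ γ/(γ-2⁻¹) - 1 :=
          Real.log_le_sub_one_of_pos (by positivity)
      _ = (γ - (γ-2⁻¹))/(γ-2⁻¹) := div_sub_one hpos.ne'
      _ = 2⁻¹/(γ-2⁻¹) := by rw [show γ - (γ-2⁻¹) = 2⁻¹ from by ring]
  have key2 : (γ-2⁻¹) * (Real.log γ - Real.log (γ-2⁻¹)) ≤ 2⁻¹ := by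
    calc (γ-2⁻¹) * (Real.log γ - Real.log (γ-2⁻¹)) ≤ (γ-2⁻¹) * (2⁻¹/(γ-2⁻¹)) :=
          mul_le_mul_of_nonneg_left key hpos.le
      _ = 2⁻¹ := by rw [mul_comm, div_mul_eq_mul_div, mul_div_assoc, div_self hpos.ne', mul_one]
  have hlog2 : Real.log 2⁻¹ = - Real.log 2 := Real.log_inv 2
  have h2 : (0:ℝ) ≤ Real.log 2 := Real.log_nonneg one_le_two
  linarith [hInt, key2]

lemma Gamma_ge_half {t : ℝ} (h1 : 1 ≤ t) (h2 : t ≤ 2) : 2⁻¹ ≤ Real.Gamma t := by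
  have hmono : ∫ s in (1:ℝ)..t, (Real.log 2⁻¹) ≤ ∫ s in (1:ℝ)..t, psi0 s := by
    apply intervalIntegral.integral_mono_on h1 intervalIntegrable_const (psi0_intble h1)
    intro s hs
    have hs1 : (1:ℝ) ≤ s := hs.1
    calc Real.log 2⁻¹ ≤ Real.log (s - 2⁻¹) := by
          apply Real.log_le_log (by norm_num)
          norm_num; linarith
      _ ≤ psi0 s := psi0_ge_half hs1
  rw [intervalIntegral.integral_const, ← logGamma_eq_integral h1] at hmono
  have hlog2 : Real.log 2⁻¹ = - Real.log 2 := Real.log_inv 2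
  have h2' : (0:ℝ) ≤ Real.log 2 := Real.log_nonneg one_le_two
  have hlb : -(Real.log 2) ≤ Real.log (Real.Gamma t) := by
    rw [smul_eq_mul, hlog2] at hmono
    nlinarith
  have := Real.exp_le_exp.mpr hlb
  rw [Real.exp_log (Real.Gamma_pos_of_pos (by linarith))] at this
  calc (2:ℝ)⁻¹ = Real.exp (-(Real.log 2)) := by
        rw [Real.exp_neg, Real.exp_log two_pos]
    _ ≤ Real.Gamma t := this

lemma Gamma_lb_small {γ : ℝ} (h0 : 0 < γ) (h1 : γ ≤ 1) : 1/(2*γ) ≤ Real.Gamma γ := by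
  have hrec : Real.Gamma (γ+1) = γ * Real.Gamma γ := Real.Gamma_add_one h0.ne'
  have hge := Gamma_ge_half (by linarith : 1 ≤ γ+1) (by linarith)
  rw [hrec] at hge
  rw [div_le_iff₀ (by positivity)]
  nlinarith [hge]

lemma sqrt2_le : Real.sqrt 2 ≤ 3/2 := by
  rw [show (3/2:ℝ) = Real.sqrt ((3/2)^2) from (Real.sqrt_sq (by norm_num)).symm]
  exact Real.sqrt_le_sqrt (by norm_num)

lemma exp_peak {γ u : ℝ} (hγ : 0 < γ) : γ*u - Real.exp u ≤ γ * Real.log γ - γ := by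
  have h := Real.add_one_le_exp (u - Real.log γ)
  have h2 : γ * Real.exp (u - Real.log γ) = Real.exp u := by
    calc γ * Real.exp (u - Real.log γ)
        = Real.exp (Real.log γ) * Real.exp (u - Real.log γ) := by rw [Real.exp_log hγ]
      _ = Real.exp (Real.log γ + (u - Real.log γ)) := (Real.exp_add _ _).symm
      _ = Real.exp u := by ring_nf
  nlinarith [mul_le_mul_of_nonneg_left h hγ.le]

lemma peak_bound {γ : ℝ} (hγ : 0 < γ) :
    (Real.sqrt (trigamma γ) / Real.Gamma γ) * Real.exp (γ * Real.log γ - γ) ≤ 3 := by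
  have hΓ := Real.Gamma_pos_of_pos hγ
  set σ := Real.sqrt (trigamma γ) with hσdef
  have hψpos : 0 < psi1 γ := lt_of_lt_of_le (by positivity) (psi1_ge hγ)
  have hσ_eq : σ = Real.sqrt (psi1 γ) := by rw [hσdef, trigamma_eq hγ]
  have hσnn : 0 ≤ σ := Real.sqrt_nonneg _
  rcases le_total 1 γ with h1 | h1
  · -- γ ≥ 1
    have hlogγ : 0 ≤ Real.log γ := Real.log_nonneg h1
    have hΓ_lb : Real.exp (γ * Real.log γ - γ - 2⁻¹ * Real.log γ) ≤ Real.Gamma γ := by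
      have := Real.exp_le_exp.mpr (logGamma_lb h1)
      rwa [Real.exp_log hΓ] at this
    have hmul : psi1 γ * γ ≤ 2 := by
      have h2 := psi1_le hγ
      have h3 : (1/γ + 1/γ^2) * γ = 1 + 1/γ := by field_simp
      have h4 : 1/γ ≤ 1 := by rw [div_le_one hγ]; exact h1
      nlinarith
    calc σ / Real.Gamma γ * Real.exp (γ * Real.log γ - γ)
        ≤ σ / Real.exp (γ * Real.log γ - γ - 2⁻¹ * Real.log γ)
            * Real.exp (γ * Real.log γ - γ) :=
          mul_le_mul_of_nonneg_right
            (div_le_div_of_nonneg_left hσnn (Real.exp_pos _) hΓ_lb) (Real.exp_pos _).le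
      _ = σ * (Real.exp (γ * Real.log γ - γ) / Real.exp (γ * Real.log γ - γ - 2⁻¹ * Real.log γ)) := by
          ring
      _ = σ * Real.exp (2⁻¹ * Real.log γ) := by
          rw [← Real.exp_sub]
          congr 2
          ring
      _ = σ * Real.sqrt γ := by
          congr 1
          rw [Real.sqrt_eq_rpow, Real.rpow_def_of_pos hγ]
          congr 1
          ring
      _ = Real.sqrt (psi1 γ * γ) := by rw [hσ_eq, Real.sqrt_mul hψpos.le]
      _ ≤ Real.sqrt 2 := Real.sqrt_le_sqrt hmul
      _ ≤ 3 := by linarith [sqrt2_le]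
  · -- γ ≤ 1
    have hΓ_lb := Gamma_lb_small hγ h1
    have hexp1 : Real.exp (γ * Real.log γ - γ) ≤ 1 := by
      rw [Real.exp_le_one_iff]
      have hlog : Real.log γ ≤ 0 := Real.log_nonpos hγ.le h1
      nlinarith
    have hmul : psi1 γ * γ^2 ≤ 2 := by
      have h2 := psi1_le hγ
      have h3 : (1/γ + 1/γ^2) * γ^2 = γ + 1 := by field_simp
      nlinarith [sq_nonneg γ, hγ]
    calc σ / Real.Gamma γ * Real.exp (γ * Real.log γ - γ)
        ≤ σ / (1/(2*γ)) * 1 :=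
          mul_le_mul (div_le_div_of_nonneg_left hσnn (by positivity) hΓ_lb) hexp1
            (Real.exp_pos _).le (by positivity)
      _ = 2 * (σ * γ) := by
          rw [one_div, div_eq_mul_inv, inv_inv]
          ring
      _ = 2 * Real.sqrt (psi1 γ * γ^2) := by
          rw [hσ_eq, Real.sqrt_mul hψpos.le, Real.sqrt_sq hγ.le]
      _ ≤ 2 * Real.sqrt 2 :=
          mul_le_mul_of_nonneg_left (Real.sqrt_le_sqrt hmul) (by norm_num)
      _ ≤ 3 := by linarith [sqrt2_le]


end LG

open LG

set_option maxHeartbeats 1000000 in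
/-- **Lemma 8.3.** For every `γ₀ > 0` there exist constants `L, D, d > 0` such that for all
`γ ≥ γ₀`, the standardized log-gamma density satisfies `f_γ(x) ≤ L` for all `x` and
`f_γ(x) ≤ D e^{−d x²}` for all `x ≥ 0`. -/
theorem lemma_8_3 (γ₀ : ℝ) (hγ₀ : 0 < γ₀) :
    ∃ L D d : ℝ, 0 < L ∧ 0 < D ∧ 0 < d ∧
      ∀ γ : ℝ, γ₀ ≤ γ →
        (∀ x : ℝ, logGammaDensity γ x ≤ L) ∧
        (∀ x : ℝ, 0 ≤ x → logGammaDensity γ x ≤ D * Real.exp (-d * x ^ 2)) := by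
  refine ⟨3, 3 * Real.exp (1/γ₀), 1/16, by norm_num, by positivity, by norm_num, ?_⟩
  intro γ hγγ₀
  have hγ : 0 < γ := lt_of_lt_of_le hγ₀ hγγ₀
  have hΓ := Real.Gamma_pos_of_pos hγ
  set σ := Real.sqrt (trigamma γ) with hσdef
  have hψpos : 0 < psi1 γ := lt_of_lt_of_le (by positivity) (psi1_ge hγ)
  have hσsq : σ^2 = psi1 γ := by
    rw [hσdef, trigamma_eq hγ, Real.sq_sqrt hψpos.le]
  have hσnn : 0 ≤ σ := Real.sqrt_nonneg _
  have hpeak := peak_bound hγ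
  have hbound : ∀ x : ℝ, logGammaDensity γ x ≤ 3 := by
    intro x
    rw [logGammaDensity]
    calc (σ / Real.Gamma γ) * Real.exp (γ * (σ*x + digamma γ) - Real.exp (σ*x + digamma γ))
        ≤ (σ / Real.Gamma γ) * Real.exp (γ * Real.log γ - γ) :=
          mul_le_mul_of_nonneg_left (Real.exp_le_exp.mpr (exp_peak hγ)) (by positivity)
      _ ≤ 3 := hpeak
  refine ⟨hbound, ?_⟩
  intro x hx
  have hγσ : 1 ≤ γ * σ^2 := by
    rw [hσsq]
    have h := mul_le_mul_of_nonneg_left (psi1_ge hγ) hγ.le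
    have h2 : γ * (1/γ) = 1 := by field_simp
    linarith
  set δ := Real.log γ - digamma γ with hδdef
  have hδ0 : 0 ≤ δ := by
    rw [hδdef, digamma_eq hγ, sub_nonneg]
    exact psi0_le_log hγ
  have hδ1 : δ ≤ 1/γ := by
    rw [hδdef, digamma_eq hγ]
    have := psi0_ge hγ
    linarith
  have hDge : (3:ℝ) ≤ 3 * Real.exp (1/γ₀) := by
    nlinarith [Real.one_le_exp (by positivity : (0:ℝ) ≤ 1/γ₀)]
  rcases le_or_gt (σ*x) (2*δ) with hcase | hcase
  · -- small x
    have hσx : σ*x ≤ 2/γ := by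
      calc σ*x ≤ 2*δ := hcase
        _ ≤ 2*(1/γ) := by linarith
        _ = 2/γ := by ring
    have hx2 : x^2 ≤ 4/γ := by
      have hσpos : 0 < σ := by nlinarith [hγσ, sq_nonneg σ, hγ]
      have hxle : x ≤ 2/(γ*σ) := by
        rw [le_div_iff₀ (by positivity)]
        calc x*(γ*σ) = (σ*x)*γ := by ring
          _ ≤ (2/γ)*γ := mul_le_mul_of_nonneg_right hσx hγ.le
          _ = 2 := by field_simp
      have hsq : x^2 ≤ (2/(γ*σ))^2 := by
        apply sq_le_sq' _ hxle
        have h9 : 0 ≤ 2/(γ*σ) := by positivity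
        linarith
      calc x^2 ≤ (2/(γ*σ))^2 := hsq
        _ = 4/(γ*(γ*σ^2)) := by
            rw [div_pow]
            congr 1
            · norm_num
            · ring
        _ ≤ 4/γ := div_le_div_of_nonneg_left (by norm_num) hγ (by nlinarith)
    have hx4 : x^2 ≤ 4/γ₀ := by
      calc x^2 ≤ 4/γ := hx2
        _ ≤ 4/γ₀ := by gcongr
    have hnn : 0 ≤ 1/γ₀ + (-(1/16) * x^2) := by
      have h1 : 0 < 1/γ₀ := by positivity
      have h44 : 4/γ₀ = 4*(1/γ₀) := by ring
      linarith
    calc logGammaDensity γ x ≤ 3 := hbound x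
      _ ≤ 3 * Real.exp (1/γ₀ + (-(1/16) * x^2)) := by
          nlinarith [Real.one_le_exp hnn]
      _ = 3 * Real.exp (1/γ₀) * Real.exp (-(1/16) * x^2) := by
          rw [Real.exp_add]; ring
  · -- gaussian regime
    set v := σ*x - δ with hvdef
    have hv0 : 0 ≤ v := by rw [hvdef]; linarith
    have hvhalf : σ*x ≤ 2*v := by rw [hvdef]; linarith
    have hquad : 1 + v + v^2/4 ≤ Real.exp v := by
      have h := Real.add_one_le_exp (v/2)
      have h2 : Real.exp (v/2) * Real.exp (v/2) = Real.exp v := by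
        rw [← Real.exp_add]
        congr 1
        ring
      nlinarith [Real.exp_pos (v/2)]
    have hid : σ*x + digamma γ = Real.log γ + v := by rw [hvdef, hδdef]; ring
    have hexpu : Real.exp (σ*x + digamma γ) = γ * Real.exp v := by
      rw [hid]
      nth_rewrite 2 [← Real.exp_log hγ]
      rw [← Real.exp_add]
    have hvsq : x^2/16 ≤ γ*(v^2/4) := by
      have hσx0 : 0 ≤ σ*x := by linarith
      have h1 : (σ*x)^2 ≤ 4*v^2 := by
        have := pow_le_pow_left₀ hσx0 hvhalf 2
        nlinarith [this]
      have h2 : x^2 ≤ γ*σ^2*x^2 := by nlinarith [sq_nonneg x]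
      have h4 : γ*(σ*x)^2 ≤ γ*(4*v^2) := mul_le_mul_of_nonneg_left h1 hγ.le
      have h5 : γ*(σ*x)^2 = γ*σ^2*x^2 := by ring
      nlinarith [h2, h4, h5]
    have hu : γ * (σ*x + digamma γ) - Real.exp (σ*x + digamma γ)
        ≤ γ * Real.log γ - γ + (-(1/16) * x^2) := by
      rw [hexpu, hid]
      have h3 := mul_le_mul_of_nonneg_left hquad hγ.le
      have h6 : γ * (Real.log γ + v) = γ * Real.log γ + γ * v := by ring
      have h7 : γ * (1 + v + v^2/4) = γ + γ*v + γ*(v^2/4) := by ring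
      linarith
    calc logGammaDensity γ x
        = (σ / Real.Gamma γ) * Real.exp (γ * (σ*x + digamma γ) - Real.exp (σ*x + digamma γ)) := by
          rw [logGammaDensity]
      _ ≤ (σ / Real.Gamma γ) * Real.exp (γ * Real.log γ - γ + (-(1/16) * x^2)) :=
          mul_le_mul_of_nonneg_left (Real.exp_le_exp.mpr hu) (by positivity)
      _ = ((σ / Real.Gamma γ) * Real.exp (γ * Real.log γ - γ)) * Real.exp (-(1/16) * x^2) := by
          rw [Real.exp_add]; ring
      _ ≤ 3 * Real.exp (-(1/16) * x^2) :=
          mul_le_mul_of_nonneg_right hpeak (Real.exp_pos _).le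
      _ ≤ 3 * Real.exp (1/γ₀) * Real.exp (-(1/16) * x^2) := by
          have := Real.exp_pos (-(1/16) * x^2)
          nlinarith [Real.one_le_exp (by positivity : (0:ℝ) ≤ 1/γ₀), Real.exp_pos (-(1/16)*x^2)]
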